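/- arXiv:2311.10037 — 2 statements merged into one kernel-verified Lean document; each statement's English description precedes it below -/
import Mathlib

section
/- In the Bargmann–Fock space, the reproducing kernel property holds: for every β ∈ ℂ and every f ∈ F², ⟨e^{β̄ z}, f⟩_{F²} = f(β), where ⟨f,g⟩_{F²} = (1/π) ∫_ℂ conj(f(z)) g(z) e^{−|z|²} dz. -/
open MeasureTheory Complex Set

open scoped Real

set_option maxHeartbeats 1000000

/-- Transfer of integrability along polar coordinates, real version. -/
lemma BF.integrableOn_polar {E : Type*} [NormedAddCommGroup E] [NormedSpace ℝ E]
    (f : ℝ × ℝ → E) (hf : Integrable f) :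
    IntegrableOn (fun p : ℝ × ℝ => p.1 • f (polarCoord.symm p)) polarCoord.target := by
  set B : ℝ × ℝ → ℝ × ℝ →L[ℝ] ℝ × ℝ := fun p =>
    LinearMap.toContinuousLinearMap (Matrix.toLin (Module.Basis.finTwoProd ℝ) (Module.Basis.finTwoProd ℝ)
      !![Real.cos p.2, -p.1 * Real.sin p.2; Real.sin p.2, p.1 * Real.cos p.2]) with hB
  have A : ∀ p ∈ polarCoord.target, HasFDerivWithinAt polarCoord.symm (B p) polarCoord.target p :=
    fun p _ => (hasFDerivAt_polarCoord_symm p).hasFDerivWithinAt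
  have B_det : ∀ p, (B p).det = p.1 := by
    intro p
    conv_rhs => rw [← one_mul p.1, ← Real.cos_sq_add_sin_sq p.2]
    simp only [hB, neg_mul, LinearMap.det_toContinuousLinearMap, LinearMap.det_toLin,
      Matrix.det_fin_two_of, sub_neg_eq_add]
    ring
  have inj : Set.InjOn polarCoord.symm polarCoord.target := polarCoord.symm.injOn
  have h1 : IntegrableOn f (polarCoord.symm '' polarCoord.target) := by
    rw [polarCoord.symm_image_target_eq_source]
    exact hf.integrableOn
  have h2 := (integrableOn_image_iff_integrableOn_abs_det_fderiv_smul volume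
    polarCoord.open_target.measurableSet A inj f).1 h1
  refine h2.congr_fun (fun p hp => ?_) polarCoord.open_target.measurableSet
  beta_reduce
  rw [B_det, abs_of_pos]
  exact hp.1

/-- Transfer of integrability along polar coordinates, complex version. -/
lemma BF.integrableOn_polar_complex (g : ℂ → ℂ) (hg : Integrable g) :
    IntegrableOn (fun p : ℝ × ℝ => p.1 • g (Complex.polarCoord.symm p)) polarCoord.target := by
  have h0 : Integrable (g ∘ Complex.measurableEquivRealProd.symm) := by
    rw [(Complex.volume_preserving_equiv_real_prod.symm).integrable_comp_emb
      Complex.measurableEquivRealProd.symm.measurableEmbedding]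
    exact hg
  have h1 := BF.integrableOn_polar _ h0
  have key : ∀ p : ℝ × ℝ, (g ∘ Complex.measurableEquivRealProd.symm) (polarCoord.symm p)
      = g (Complex.polarCoord.symm p) := by
    intro p
    simp only [Function.comp_apply, Complex.polarCoord_symm_apply, polarCoord_symm_apply,
      Complex.measurableEquivRealProd_symm_apply]
    congr 1
    apply Complex.ext <;> simp [Complex.ofReal_mul, Complex.ofReal_cos, Complex.ofReal_sin,
      ← Complex.cos_ofReal_re, ← Complex.sin_ofReal_re] <;> ring
  simpa only [key] using h1

/-- Mean value property of holomorphic functions on circles, `0..2π` version. -/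
lemma BF.circleMean (h : ℂ → ℂ) (hd : Differentiable ℂ h) {r : ℝ} (hr : 0 < r) :
    ∫ θ in (0:ℝ)..(2*π), h (circleMap 0 r θ) = (2*π) * h 0 := by
  have hball : DifferentiableOn ℂ h (Metric.closedBall 0 r) := hd.differentiableOn
  have H := hball.circleIntegral_sub_inv_smul (Metric.mem_ball_self hr)
  rw [circleIntegral] at H
  simp only [deriv_circleMap, sub_zero, smul_eq_mul] at H
  have h2 : EqOn (fun θ : ℝ => circleMap 0 r θ * I * ((circleMap 0 r θ)⁻¹ * h (circleMap 0 r θ)))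
      (fun θ : ℝ => I * h (circleMap 0 r θ)) (uIcc 0 (2*π)) := by
    intro θ _
    have hne : circleMap 0 r θ ≠ 0 := by
      simpa using circleMap_ne_center (c := 0) (ne_of_gt hr) (θ := θ)
    field_simp
  rw [intervalIntegral.integral_congr h2, intervalIntegral.integral_const_mul] at H
  apply mul_left_cancel₀ I_ne_zero
  rw [H]
  ring

/-- Mean value property, `Ioo (-π) π` version. -/
lemma BF.circleMeanIoo (h : ℂ → ℂ) (hd : Differentiable ℂ h) {r : ℝ} (hr : 0 < r) :
    ∫ θ in Ioo (-π) π, h (circleMap 0 r θ) = (2*π) * h 0 := by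
  have hper : Function.Periodic (fun θ : ℝ => h (circleMap 0 r θ)) (2*π) :=
    fun θ => by simp only [periodic_circleMap 0 r θ]
  calc ∫ θ in Ioo (-π) π, h (circleMap 0 r θ)
      = ∫ θ in (-π)..π, h (circleMap 0 r θ) := by
        rw [intervalIntegral.integral_of_le (by linarith [Real.pi_pos])]
        exact (MeasureTheory.integral_Ioc_eq_integral_Ioo).symm
    _ = ∫ θ in (0:ℝ)..(2*π), h (circleMap 0 r θ) := by
        have := hper.intervalIntegral_add_eq (-π) 0
        rw [zero_add] at this
        rw [show (-π) + 2*π = π by ring] at this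
        exact this
    _ = (2*π) * h 0 := BF.circleMean h hd hr

lemma BF.ofReal_exp_neg_sq (r : ℝ) :
    ((Real.exp (-r ^ 2) : ℝ) : ℂ) = Complex.exp (-(1:ℂ) * (r:ℂ) ^ 2) := by
  rw [Complex.ofReal_exp]
  push_cast
  ring_nf

/-- Gaussian-weighted mean value property for entire functions. -/
lemma BF.gaussMean (h : ℂ → ℂ) (hd : Differentiable ℂ h)
    (hi : Integrable fun z : ℂ => h z * (Real.exp (-‖z‖ ^ 2) : ℝ)) :
    ∫ z : ℂ, h z * (Real.exp (-‖z‖ ^ 2) : ℝ) = (π : ℂ) * h 0 := by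
  set g : ℂ → ℂ := fun z => h z * (Real.exp (-‖z‖ ^ 2) : ℝ) with hg
  rw [← Complex.integral_comp_polarCoord_symm g]
  have hint : IntegrableOn (fun p : ℝ × ℝ => p.1 • g (Complex.polarCoord.symm p))
      polarCoord.target := BF.integrableOn_polar_complex g hi
  rw [polarCoord_target] at hint ⊢
  rw [Measure.volume_eq_prod ℝ ℝ] at hint ⊢
  rw [setIntegral_prod _ hint]
  have inner_eq : ∀ r ∈ Ioi (0:ℝ),
      (∫ θ in Ioo (-π) π, (r, θ).1 • g (Complex.polarCoord.symm (r, θ)))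
      = ((r:ℂ) * Complex.exp (-(1:ℂ) * (r:ℂ) ^ 2)) * ((2*π) * h 0) := by
    intro r hr
    have hr : (0:ℝ) < r := hr
    have e1 : ∀ θ ∈ Ioo (-π) π, (r, θ).1 • g (Complex.polarCoord.symm (r, θ))
        = ((r:ℂ) * (Real.exp (-r ^ 2) : ℝ)) * h (circleMap 0 r θ) := by
      intro θ _
      have harg : Complex.polarCoord.symm (r, θ) = circleMap 0 r θ := by
        simp [circleMap, Complex.exp_mul_I]
      rw [hg]
      simp only [harg]
      have hnorm : ‖circleMap 0 r θ‖ = r := by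
        rw [norm_circleMap_zero]
        exact abs_of_pos hr
      rw [hnorm, Complex.real_smul]
      ring
    rw [setIntegral_congr_fun measurableSet_Ioo e1, integral_const_mul,
      BF.circleMeanIoo h hd hr, BF.ofReal_exp_neg_sq]
  rw [setIntegral_congr_fun measurableSet_Ioi inner_eq, integral_mul_const,
    integral_mul_cexp_neg_mul_sq (by norm_num : (0:ℝ) < (1:ℂ).re)]
  push_cast
  ring

lemma BF.normsq_cast (z : ℂ) : ((‖z‖ ^ 2 : ℝ) : ℂ) = z * (starRingEnd ℂ) z := by
  rw [Complex.mul_conj]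
  norm_cast
  rw [Complex.normSq_eq_norm_sq]

lemma BF.expkey (β w : ℂ) :
    (starRingEnd ℂ) (Complex.exp ((starRingEnd ℂ) β * (w + β))) * ((Real.exp (-‖w + β‖ ^ 2) : ℝ) : ℂ)
    = Complex.exp (-(starRingEnd ℂ) β * w) * ((Real.exp (-‖w‖ ^ 2) : ℝ) : ℂ) := by
  rw [← Complex.exp_conj, Complex.ofReal_exp, Complex.ofReal_exp, ← Complex.exp_add,
    ← Complex.exp_add]
  congr 1
  rw [Complex.ofReal_neg, Complex.ofReal_neg, BF.normsq_cast, BF.normsq_cast]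
  simp only [map_mul, map_add, Complex.conj_conj]
  ring

/-- Reproducing kernel property of the Bargmann–Fock space: for every `β ∈ ℂ` and every
entire `f` with `∫ |f(z)|² e^{−|z|²} dz < ∞`,
`(1/π) ∫ conj(e^{β̄ z}) f(z) e^{−|z|²} dz = f(β)`. -/
theorem stmt13 (β : ℂ) (f : ℂ → ℂ) (hf : Differentiable ℂ f)
    (hf2 : Integrable (fun z : ℂ => ‖f z‖ ^ 2 * Real.exp (-‖z‖ ^ 2))) :
    (1 / (Real.pi : ℂ)) *
        ∫ z : ℂ, (starRingEnd ℂ) (Complex.exp ((starRingEnd ℂ) β * z)) * f z *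
          (Real.exp (-‖z‖ ^ 2) : ℝ)
      = f β := by
  set G : ℂ → ℂ := fun z => (starRingEnd ℂ) (Complex.exp ((starRingEnd ℂ) β * z)) * f z *
    (Real.exp (-‖z‖ ^ 2) : ℝ) with hG
  set h : ℂ → ℂ := fun w => Complex.exp (-(starRingEnd ℂ) β * w) * f (w + β) with hh
  -- pointwise translation identity
  have key : ∀ w : ℂ, G (w + β) = h w * (Real.exp (-‖w‖ ^ 2) : ℝ) := by
    intro w
    simp only [hG, hh]
    rw [mul_right_comm, BF.expkey β w]
    ring
  -- integrability of G
  have hcont : Continuous G := by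
    rw [hG]
    exact ((Complex.continuous_conj.comp (Complex.continuous_exp.comp
        (continuous_const.mul continuous_id))).mul hf.continuous).mul
      (Complex.continuous_ofReal.comp (Real.continuous_exp.comp (continuous_norm.pow 2).neg))
  have hA : Integrable (fun z : ℂ => Real.exp (2 * ((starRingEnd ℂ) β * z).re - ‖z‖ ^ 2)) := by
    have h1 := (GaussianFourier.integrable_cexp_neg_mul_sq_norm_add (V := ℂ) (b := (1:ℂ)) (by simp) 2 β).norm
    refine h1.congr (Filter.Eventually.of_forall fun z => ?_)
    simp only [Complex.norm_exp]
    congr 1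
    have hi2 : (inner ℝ β z : ℝ) = ((starRingEnd ℂ) β * z).re :=
      (Complex.inner β z).trans (by rw [mul_comm])
    simp only [← Complex.ofReal_pow, Complex.add_re, Complex.mul_re, Complex.ofReal_re,
      Complex.ofReal_im, Complex.neg_re, Complex.neg_im, Complex.one_re, Complex.one_im,
      Complex.re_ofNat, Complex.im_ofNat, hi2]
    ring
  have hb : ∀ z : ℂ, ‖G z‖ ≤ (1/2) * (Real.exp (2 * ((starRingEnd ℂ) β * z).re - ‖z‖ ^ 2)
      + ‖f z‖ ^ 2 * Real.exp (-‖z‖ ^ 2)) := by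
    intro z
    have hGn : ‖G z‖ = Real.exp (((starRingEnd ℂ) β * z).re) * ‖f z‖ * Real.exp (-‖z‖ ^ 2) := by
      rw [hG]
      simp only [norm_mul, Complex.norm_conj, Complex.norm_exp,
        Complex.norm_real, Real.norm_eq_abs]
      rw [abs_of_pos (Real.exp_pos _)]
    have h2ab := two_mul_le_add_sq (Real.exp (((starRingEnd ℂ) β * z).re - ‖z‖ ^ 2 / 2))
      (‖f z‖ * Real.exp (-‖z‖ ^ 2 / 2))
    have ea : Real.exp (((starRingEnd ℂ) β * z).re - ‖z‖ ^ 2 / 2) ^ 2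
        = Real.exp (2 * ((starRingEnd ℂ) β * z).re - ‖z‖ ^ 2) := by
      rw [sq, ← Real.exp_add]; ring_nf
    have eb : (‖f z‖ * Real.exp (-‖z‖ ^ 2 / 2)) ^ 2 = ‖f z‖ ^ 2 * Real.exp (-‖z‖ ^ 2) := by
      rw [mul_pow, sq (Real.exp _), ← Real.exp_add]; ring_nf
    have eab : Real.exp (((starRingEnd ℂ) β * z).re - ‖z‖ ^ 2 / 2)
        * (‖f z‖ * Real.exp (-‖z‖ ^ 2 / 2))
        = Real.exp (((starRingEnd ℂ) β * z).re) * ‖f z‖ * Real.exp (-‖z‖ ^ 2) := by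
      rw [show Real.exp (((starRingEnd ℂ) β * z).re - ‖z‖ ^ 2 / 2)
          = Real.exp (((starRingEnd ℂ) β * z).re) * Real.exp (-(‖z‖ ^ 2 / 2)) by
        rw [← Real.exp_add]; ring_nf]
      rw [show Real.exp (-‖z‖ ^ 2) = Real.exp (-(‖z‖ ^ 2 / 2)) * Real.exp (-(‖z‖ ^ 2 / 2)) by
        rw [← Real.exp_add]; ring_nf]
      ring
    rw [ea, eb] at h2ab
    rw [hGn, ← eab]
    linarith
  have hIntG : Integrable G :=
    (((hA.add hf2).const_mul (1/2)).mono' hcont.aestronglyMeasurable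
      (Filter.Eventually.of_forall hb))
  -- translate
  have htrans : (∫ z : ℂ, G z) = ∫ w : ℂ, G (w + β) :=
    (integral_add_right_eq_self G β).symm
  have hkeyf : (fun w : ℂ => G (w + β)) = fun w : ℂ => h w * (Real.exp (-‖w‖ ^ 2) : ℝ) :=
    funext key
  have hd_h : Differentiable ℂ h := by
    rw [hh]
    exact ((differentiable_id.const_mul _).cexp).mul (hf.comp (differentiable_id.add_const β))
  have hInt_h : Integrable (fun w : ℂ => h w * (Real.exp (-‖w‖ ^ 2) : ℝ)) := by
    rw [← hkeyf]
    exact hIntG.comp_add_right β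
  have := BF.gaussMean h hd_h hInt_h
  rw [htrans, hkeyf, this]
  have h0 : h 0 = f β := by
    rw [hh]
    simp
  rw [h0]
  have hpi : (Real.pi : ℂ) ≠ 0 := Complex.ofReal_ne_zero.mpr Real.pi_ne_zero
  field_simp
end

section
/- For every k ≥ 2 and every s with 1 ≤ s ≤ k−1, the s-th iterated right commutator [∂_z^k, z^k]^{(s)} (defined by [A,B]^{(1)}=[A,B], [A,B]^{(s+1)}=[[A,B]^{(s)},B]), acting on polynomials, can be written as z^{k(s−1)} · ( c_{s,k−s} z^{k−s} ∂_z^{k−s} + Σ_{r=0}^{k−s−1} c_{s,r} z^r ∂_z^r ) for some nonnegative real coefficients c_{s,r} with c_{s,k−s} ≠ 0. -/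
/-- Differentiation `∂_z` as an endomorphism of `ℂ[z]`. -/
noncomputable def Dz : Module.End ℂ (Polynomial ℂ) := Polynomial.derivative

/-- Multiplication by `z` as an endomorphism of `ℂ[z]`. -/
noncomputable def Mz : Module.End ℂ (Polynomial ℂ) := LinearMap.mulLeft ℂ Polynomial.X

/-- The `s`-th iterated right commutator: `[A,B]^{(0)} = A`, `[A,B]^{(s+1)} = [[A,B]^{(s)}, B]`,
so that `[A,B]^{(1)} = [A,B]`. -/
def iterComm {M : Type*} [Ring M] (A B : M) : ℕ → M
  | 0 => A
  | s + 1 => iterComm A B s * B - B * iterComm A B s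

lemma DM : Dz * Mz = Mz * Dz + 1 := by
  apply LinearMap.ext; intro p
  simp [Dz, Mz, Module.End.mul_apply, Polynomial.derivative_mul, mul_comm]

lemma DMpow (n : ℕ) : Dz * Mz ^ (n+1) = Mz ^ (n+1) * Dz + ((n:ℂ)+1) • Mz ^ n := by
  induction n with
  | zero => simpa using DM
  | succ n ih =>
    have h : Dz * Mz ^ (n+2) = (Dz * Mz ^ (n+1)) * Mz := by rw [mul_assoc, ← pow_succ]
    rw [h, ih, add_mul, smul_mul_assoc, mul_assoc, DM, mul_add, mul_one, ← mul_assoc,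
      ← pow_succ, ← pow_succ]
    push_cast
    module

lemma DMpow' (n : ℕ) (hn : 1 ≤ n) : Dz * Mz ^ n = Mz ^ n * Dz + (n:ℂ) • Mz ^ (n-1) := by
  obtain ⟨m, rfl⟩ : ∃ m, n = m + 1 := ⟨n - 1, by omega⟩
  simpa using DMpow m

lemma coefId (k r j : ℕ) (hj : j ≤ r) (hrk : r + 1 ≤ k) :
    (r+1).choose j * k.descFactorial (r+1-j)
      = (if j = 0 then 0 else r.choose (j-1) * k.descFactorial (r-(j-1)))
        + r.choose j * k.descFactorial (r-j) * (k-r+j) := by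
  match j with
  | 0 =>
    rw [if_pos rfl]
    simp [Nat.descFactorial_succ]
    ring
  | (i+1) =>
    rw [if_neg (by omega)]
    rw [show r + 1 - (i+1) = (r-i-1)+1 by omega, Nat.descFactorial_succ,
      show k - (r-i-1) = k - r + (i+1) by omega,
      show r - (i+1-1) = (r-i-1)+1 by omega, Nat.descFactorial_succ,
      show k - (r-i-1) = k - r + (i+1) by omega,
      show r - (i+1) = r-i-1 by omega,
      show i+1-1 = i by omega,
      Nat.choose_succ_succ]
    ring

lemma key (k : ℕ) : ∀ r, r ≤ k →
    Dz^r * Mz^k = Mz^k * Dz^r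
      + ∑ j ∈ Finset.range r, ((r.choose j * k.descFactorial (r-j) : ℕ):ℂ) • (Mz^(k-r+j) * Dz^j) := by
  intro r
  induction r with
  | zero => simp
  | succ r ih =>
    intro hrk
    have ih' := ih (by omega)
    have hsplit : ∀ j ∈ Finset.range r,
        ((r.choose j * k.descFactorial (r-j) : ℕ):ℂ) • (Dz * (Mz^(k-r+j) * Dz^j))
        = ((r.choose j * k.descFactorial (r-j) : ℕ):ℂ) • (Mz^(k-r+j) * Dz^(j+1))
          + ((r.choose j * k.descFactorial (r-j) * (k-r+j) : ℕ):ℂ) • (Mz^(k-(r+1)+j) * Dz^j) := by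
      intro j hj
      rw [← mul_assoc, DMpow' (k-r+j) (by omega), add_mul, smul_mul_assoc, mul_assoc,
        ← pow_succ', show k-r+j-1 = k-(r+1)+j by omega]
      push_cast
      module
    have hDk : Dz * (Mz^k * Dz^r) = Mz^k * Dz^(r+1) + ((k:ℕ):ℂ) • (Mz^(k-1) * Dz^r) := by
      rw [← mul_assoc, DMpow' k (by omega), add_mul, smul_mul_assoc, mul_assoc, ← pow_succ']
    have hsum : ∑ j ∈ Finset.range (r+1),
          (((r+1).choose j * k.descFactorial (r+1-j) : ℕ):ℂ) • (Mz^(k-(r+1)+j) * Dz^j)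
        = ((k:ℕ):ℂ) • (Mz^(k-1) * Dz^r)
          + (∑ j ∈ Finset.range r, ((r.choose j * k.descFactorial (r-j) : ℕ):ℂ) • (Mz^(k-r+j) * Dz^(j+1))
             + ∑ j ∈ Finset.range r, ((r.choose j * k.descFactorial (r-j) * (k-r+j) : ℕ):ℂ) • (Mz^(k-(r+1)+j) * Dz^j)) := by
      have h1 : ∀ j ∈ Finset.range (r+1),
          (((r+1).choose j * k.descFactorial (r+1-j) : ℕ):ℂ) • (Mz^(k-(r+1)+j) * Dz^j)
          = (if j = 0 then (0:ℂ) else ((r.choose (j-1) * k.descFactorial (r-(j-1)) : ℕ):ℂ)) • (Mz^(k-(r+1)+j) * Dz^j)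
            + ((r.choose j * k.descFactorial (r-j) * (k-r+j) : ℕ):ℂ) • (Mz^(k-(r+1)+j) * Dz^j) := by
        intro j hj
        rw [← add_smul]
        congr 1
        rw [coefId k r j (by simp at hj; omega) hrk, Nat.cast_add,
          apply_ite (Nat.cast : ℕ → ℂ), Nat.cast_zero]
      rw [Finset.sum_congr rfl h1, Finset.sum_add_distrib]
      have h2 : ∑ j ∈ Finset.range (r+1),
          (if j = 0 then (0:ℂ) else ((r.choose (j-1) * k.descFactorial (r-(j-1)) : ℕ):ℂ)) • (Mz^(k-(r+1)+j) * Dz^j)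
          = ∑ j ∈ Finset.range r, ((r.choose j * k.descFactorial (r-j) : ℕ):ℂ) • (Mz^(k-r+j) * Dz^(j+1)) := by
        rw [Finset.sum_range_succ']
        rw [if_pos rfl, zero_smul, add_zero]
        refine Finset.sum_congr rfl fun j hj => ?_
        rw [if_neg (Nat.succ_ne_zero j), Nat.add_sub_cancel,
          show k-(r+1)+(j+1) = k-r+j by omega]
      have h3 : ∑ j ∈ Finset.range (r+1),
          ((r.choose j * k.descFactorial (r-j) * (k-r+j) : ℕ):ℂ) • (Mz^(k-(r+1)+j) * Dz^j)
          = (∑ j ∈ Finset.range r, ((r.choose j * k.descFactorial (r-j) * (k-r+j) : ℕ):ℂ) • (Mz^(k-(r+1)+j) * Dz^j))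
            + ((k:ℕ):ℂ) • (Mz^(k-1) * Dz^r) := by
        rw [Finset.sum_range_succ]
        congr 1
        rw [Nat.choose_self, Nat.sub_self, Nat.descFactorial_zero,
          show k-r+r = k by omega, show k-(r+1)+r = k-1 by omega]
        norm_num
      rw [h2, h3]
      abel
    calc Dz^(r+1) * Mz^k = Dz * (Dz^r * Mz^k) := by rw [pow_succ', mul_assoc]
      _ = Dz * (Mz^k * Dz^r)
          + ∑ j ∈ Finset.range r, ((r.choose j * k.descFactorial (r-j) : ℕ):ℂ) • (Dz * (Mz^(k-r+j) * Dz^j)) := by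
            rw [ih', mul_add, Finset.mul_sum]
            simp_rw [mul_smul_comm]
      _ = Mz^k * Dz^(r+1) + ((k:ℕ):ℂ) • (Mz^(k-1) * Dz^r)
          + (∑ j ∈ Finset.range r, ((r.choose j * k.descFactorial (r-j) : ℕ):ℂ) • (Mz^(k-r+j) * Dz^(j+1))
             + ∑ j ∈ Finset.range r, ((r.choose j * k.descFactorial (r-j) * (k-r+j) : ℕ):ℂ) • (Mz^(k-(r+1)+j) * Dz^j)) := by
            rw [hDk, Finset.sum_congr rfl hsplit, Finset.sum_add_distrib]
      _ = Mz^k * Dz^(r+1)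
          + ∑ j ∈ Finset.range (r+1), (((r+1).choose j * k.descFactorial (r+1-j) : ℕ):ℂ) • (Mz^(k-(r+1)+j) * Dz^j) := by
            rw [hsum]; abel

lemma commMD (k r : ℕ) (h : r ≤ k) :
    (Mz^r * Dz^r) * Mz^k - Mz^k * (Mz^r * Dz^r)
      = Mz^k * ∑ j ∈ Finset.range r, ((r.choose j * k.descFactorial (r-j) : ℕ):ℂ) • (Mz^j * Dz^j) := by
  rw [mul_assoc, key k r h, mul_add, ← mul_assoc, ← pow_add, show r + k = k + r by omega,
    pow_add, mul_assoc, add_sub_cancel_left, Finset.mul_sum, Finset.mul_sum]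
  refine Finset.sum_congr rfl fun j hj => ?_
  rw [mul_smul_comm, mul_smul_comm]
  congr 1
  rw [← mul_assoc, ← mul_assoc, ← pow_add, ← pow_add, show r + (k - r + j) = k + j by omega]

/-- For `k ≥ 2` and `1 ≤ s ≤ k−1`, the iterated commutator `[∂_z^k, z^k]^{(s)}` equals
`z^{k(s−1)} (c_{s,k−s} z^{k−s} ∂_z^{k−s} + Σ_{r<k−s} c_{s,r} z^r ∂_z^r)` for some
nonnegative real coefficients with `c_{s,k−s} ≠ 0`. -/
theorem stmt17 (k : ℕ) (hk : 2 ≤ k) (s : ℕ) (hs1 : 1 ≤ s) (hs2 : s ≤ k - 1) :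
    ∃ c : ℕ → ℝ, (∀ r, 0 ≤ c r) ∧ c (k - s) ≠ 0 ∧
      iterComm (Dz ^ k) (Mz ^ k) s
        = Mz ^ (k * (s - 1)) *
            ∑ r ∈ Finset.range (k - s + 1), ((c r : ℝ) : ℂ) • (Mz ^ r * Dz ^ r) := by
  induction s with
  | zero => omega
  | succ s ihs =>
    rcases Nat.eq_zero_or_pos s with hs0 | hspos
    · subst hs0
      refine ⟨fun r => ((k.choose r * k.descFactorial (k-r) : ℕ):ℝ), fun r => by positivity,
        ?_, ?_⟩
      · have h1 : 0 < k.choose (k-1) := Nat.choose_pos (by omega)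
        have h2 : 0 < k.descFactorial (k-(k-1)) :=
          Nat.pos_of_ne_zero fun h => by
            have := Nat.descFactorial_eq_zero_iff_lt.mp h; omega
        have h3 := Nat.mul_pos h1 h2
        show ((k.choose (k-(0+1)) * k.descFactorial (k-(k-(0+1))) : ℕ):ℝ) ≠ 0
        simp only [Nat.zero_add]
        exact_mod_cast h3.ne'
      · show Dz^k * Mz^k - Mz^k * Dz^k = _
        rw [show k*(1-1) = 0 by omega, pow_zero, one_mul, show k - 1 + 1 = k by omega,
          key k k le_rfl, add_sub_cancel_left]
        refine Finset.sum_congr rfl fun j hj => ?_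
        rw [show k - k + j = j by omega]
        congr 1
    · have hs2' : s ≤ k - 1 := by omega
      obtain ⟨c, hc0, hcne, hT⟩ := ihs hspos hs2'
      obtain ⟨t, rfl⟩ : ∃ t, s = t + 1 := ⟨s - 1, by omega⟩
      set n := k - (t+1) with hn
      have hn2 : 2 ≤ n := by omega
      refine ⟨fun j => ∑ r ∈ Finset.range (n+1),
          if j < r then c r * ((r.choose j * k.descFactorial (r-j) : ℕ):ℝ) else 0,
        fun j => Finset.sum_nonneg fun r _ => by
          split
          · exact mul_nonneg (hc0 _) (Nat.cast_nonneg _)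
          · exact le_refl 0, ?_, ?_⟩
      · have hpos : (0:ℝ) < ∑ r ∈ Finset.range (n+1),
            if k - (t+1+1) < r then c r * ((r.choose (k-(t+1+1)) * k.descFactorial (r-(k-(t+1+1))) : ℕ):ℝ) else 0 := by
          apply Finset.sum_pos' (fun r _ => by
            split
            · exact mul_nonneg (hc0 _) (Nat.cast_nonneg _)
            · exact le_refl 0)
          refine ⟨n, Finset.self_mem_range_succ n, ?_⟩
          rw [if_pos (by omega)]
          have hc : 0 < c n := (hc0 n).lt_of_ne (Ne.symm hcne)
          have h1 : 0 < n.choose (k-(t+1+1)) := Nat.choose_pos (by omega)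
          have h2 : 0 < k.descFactorial (n-(k-(t+1+1))) :=
            Nat.pos_of_ne_zero fun h => by
              have := Nat.descFactorial_eq_zero_iff_lt.mp h; omega
          positivity
        exact ne_of_gt hpos
      · show iterComm (Dz^k) (Mz^k) (t+1) * Mz^k - Mz^k * iterComm (Dz^k) (Mz^k) (t+1) = _
        rw [hT]
        set S := ∑ r ∈ Finset.range (n+1), ((c r : ℝ):ℂ) • (Mz^r * Dz^r) with hS
        have hcomm : Mz^k * Mz^(k*(t+1-1)) = Mz^(k*(t+1-1)) * Mz^k := by
          rw [← pow_add, ← pow_add, Nat.add_comm]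
        have step1 : Mz^(k*(t+1-1)) * S * Mz^k - Mz^k * (Mz^(k*(t+1-1)) * S)
            = Mz^(k*(t+1-1)) * (S * Mz^k - Mz^k * S) := by
          rw [mul_sub, mul_assoc, ← mul_assoc (Mz^k), hcomm, mul_assoc]
        rw [step1]
        have step2 : S * Mz^k - Mz^k * S
            = Mz^k * ∑ j ∈ Finset.range (k - (t+1+1) + 1),
                ((((∑ r ∈ Finset.range (n+1),
                  if j < r then c r * ((r.choose j * k.descFactorial (r-j) : ℕ):ℝ) else 0 : ℝ)):ℝ):ℂ) • (Mz^j * Dz^j) := by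
          rw [hS, Finset.sum_mul, Finset.mul_sum, ← Finset.sum_sub_distrib]
          have e1 : ∀ r ∈ Finset.range (n+1),
              ((c r : ℝ):ℂ) • (Mz^r * Dz^r) * Mz^k - Mz^k * (((c r : ℝ):ℂ) • (Mz^r * Dz^r))
              = Mz^k * ∑ j ∈ Finset.range (k-(t+1+1)+1),
                  (if j < r then ((c r : ℝ):ℂ) * ((r.choose j * k.descFactorial (r-j) : ℕ):ℂ) else 0) • (Mz^j * Dz^j) := by
            intro r hr
            have hr' : r ≤ n := by simp at hr; omega
            have hrange : k - (t+1+1) + 1 = n := by omega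
            rw [smul_mul_assoc, mul_smul_comm]
            rw [← smul_sub ((c r : ℝ):ℂ) (Mz^r * Dz^r * Mz^k) (Mz^k * (Mz^r * Dz^r))]
            rw [commMD k r (by omega), hrange]
            rw [← mul_smul_comm, Finset.smul_sum]
            congr 1
            rw [← Finset.sum_subset (Finset.range_subset_range.mpr hr')
              (fun j _ hj => by rw [if_neg (by simp at hj; omega), zero_smul])]
            refine Finset.sum_congr rfl fun j hj => ?_
            rw [if_pos (by simpa using hj), smul_smul]
          rw [Finset.sum_congr rfl e1, ← Finset.mul_sum, Finset.sum_comm]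
          congr 1
          refine Finset.sum_congr rfl fun j hj => ?_
          rw [← Finset.sum_smul]
          congr 1
          push_cast [apply_ite (fun x : ℝ => (x:ℂ))]
          rfl
        rw [step2, ← mul_assoc, ← pow_add, show k*(t+1-1) + k = k*(t+1+1-1) by
          rw [Nat.add_sub_cancel, Nat.add_sub_cancel, Nat.mul_succ]]
end
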